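/- Let A, B, C be quaternions with AB ≠ 0 and suppose A and -B are not equivalent (i.e., it is not the case that |A| = |B| and Re(A) = -Re(B)). Then the Sylvester equation A z + z B = C has the unique solution z = f_l^{-1}(C + A^{-1} C conj(B)), where f_l = 2 Re(B) + A + |B|² A^{-1}. -/

import Mathlib

open Quaternion

lemma re_mul_comm (a b : ℍ[ℝ]) : (a * b).re = (b * a).re := by
  simp only [Quaternion.re_mul]; ring


lemma aux13 (ar ai aj ak br bi bj bk : ℝ)
    (h0 : ar * ar - ai * ai - aj * aj - ak * ak + 2 * br * ar
        + (br ^ 2 + bi ^ 2 + bj ^ 2 + bk ^ 2) = 0)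
    (h1 : 2 * (ar + br) * ai = 0)
    (h2 : 2 * (ar + br) * aj = 0)
    (h3 : 2 * (ar + br) * ak = 0) :
    ar ^ 2 + ai ^ 2 + aj ^ 2 + ak ^ 2 = br ^ 2 + bi ^ 2 + bj ^ 2 + bk ^ 2 ∧ ar = -br := by
  rcases eq_or_ne (ar + br) 0 with hc | hc
  · have hr : ar = -br := by linarith
    subst hr
    exact ⟨by nlinarith [h0], rfl⟩
  · exfalso
    have htwo : (2 : ℝ) * (ar + br) ≠ 0 := by
      intro h
      rcases mul_eq_zero.mp h with h' | h'
      · norm_num at h'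
      · exact hc h'
    have hai : ai = 0 := by rcases mul_eq_zero.mp h1 with h | h; exact absurd h htwo; exact h
    have haj : aj = 0 := by rcases mul_eq_zero.mp h2 with h | h; exact absurd h htwo; exact h
    have hak : ak = 0 := by rcases mul_eq_zero.mp h3 with h | h; exact absurd h htwo; exact h
    subst hai; subst haj; subst hak
    have hsq : (ar + br) ^ 2 = 0 := by nlinarith [sq_nonneg bi, sq_nonneg bj, sq_nonneg bk]
    exact hc (pow_eq_zero_iff two_ne_zero |>.mp hsq)

set_option maxHeartbeats 1000000 in
theorem stmt13 (A B C : ℍ[ℝ]) (hAB : A * B ≠ 0)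
    (hne : ¬(‖A‖ = ‖B‖ ∧ A.re = -B.re)) :
    ∀ z : ℍ[ℝ], A * z + z * B = C ↔
      z = (algebraMap ℝ ℍ[ℝ] (2 * B.re) + A + ‖B‖ ^ 2 • A⁻¹)⁻¹
            * (C + A⁻¹ * C * star B) := by
  have hA : A ≠ 0 := left_ne_zero_of_mul hAB
  have hnormB : (‖B‖ : ℝ) ^ 2 = normSq B := by
    rw [normSq_eq_norm_mul_self, sq]
  have hne' : ¬(normSq A = normSq B ∧ A.re = -B.re) := by
    rintro ⟨h1, h2⟩
    refine hne ⟨?_, h2⟩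
    rw [normSq_eq_norm_mul_self, normSq_eq_norm_mul_self] at h1
    nlinarith [norm_nonneg A, norm_nonneg B]
  set q : ℍ[ℝ] := algebraMap ℝ ℍ[ℝ] (2 * B.re) + A + ‖B‖ ^ 2 • A⁻¹ with hq
  set P : ℍ[ℝ] := A * A + algebraMap ℝ ℍ[ℝ] (2 * B.re) * A
      + algebraMap ℝ ℍ[ℝ] (‖B‖ ^ 2) with hPdef
  have hP : P ≠ 0 := by
    intro h
    have h0 := congrArg QuaternionAlgebra.re h
    have h1 := congrArg QuaternionAlgebra.imI h
    have h2 := congrArg QuaternionAlgebra.imJ h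
    have h3 := congrArg QuaternionAlgebra.imK h
    simp only [hPdef, Quaternion.re_add, Quaternion.imI_add, Quaternion.imJ_add,
      Quaternion.imK_add, Quaternion.re_mul, Quaternion.imI_mul, Quaternion.imJ_mul,
      Quaternion.imK_mul, Quaternion.algebraMap_def, Quaternion.re_coe, Quaternion.imI_coe,
      Quaternion.imJ_coe, Quaternion.imK_coe, Quaternion.re_zero, Quaternion.imI_zero,
      Quaternion.imJ_zero, Quaternion.imK_zero] at h0 h1 h2 h3
    rw [hnormB, normSq_def'] at h0
    have h0' : A.re * A.re - A.imI * A.imI - A.imJ * A.imJ - A.imK * A.imK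
        + 2 * B.re * A.re
        + (B.re ^ 2 + B.imI ^ 2 + B.imJ ^ 2 + B.imK ^ 2) = 0 := by linear_combination h0
    have h1' : 2 * (A.re + B.re) * A.imI = 0 := by linear_combination h1
    have h2' : 2 * (A.re + B.re) * A.imJ = 0 := by linear_combination h2
    have h3' : 2 * (A.re + B.re) * A.imK = 0 := by linear_combination h3
    have := aux13 A.re A.imI A.imJ A.imK B.re B.imI B.imJ B.imK h0' h1' h2' h3'
    exact hne' ⟨by rw [normSq_def', normSq_def']; exact this.1, this.2⟩
  have hAq : A * q = P := by
    rw [hq, hPdef, mul_add, mul_add, mul_smul_comm, mul_inv_cancel₀ hA,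
      Quaternion.algebraMap_def]
    have e0 : ‖B‖ ^ 2 • (1 : ℍ[ℝ]) = (↑(‖B‖ ^ 2) : ℍ[ℝ]) := by
      rw [← Quaternion.coe_mul_eq_smul, mul_one]
    rw [e0, ← Quaternion.coe_commutes]
    abel
  have hq0 : q ≠ 0 := by
    intro h
    apply hP
    rw [← hAq, h, mul_zero]
  -- key identity
  have key : ∀ z : ℍ[ℝ], q * z = (A * z + z * B) + A⁻¹ * (A * z + z * B) * star B := by
    intro z
    have e1 : A⁻¹ * (A * z + z * B) = z + A⁻¹ * (z * B) := by
      rw [mul_add, inv_mul_cancel_left₀ hA]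
    have e2 : A⁻¹ * (z * B) * star B = ‖B‖ ^ 2 • (A⁻¹ * z) := by
      rw [mul_assoc A⁻¹ (z * B) (star B), mul_assoc z B (star B), self_mul_star,
        Quaternion.mul_coe_eq_smul, mul_smul_comm, ← hnormB]
    have e3 : z * B + z * star B = (2 * B.re) • z := by
      rw [← mul_add, self_add_star', Quaternion.mul_coe_eq_smul]
    rw [e1, add_mul z (A⁻¹ * (z * B)) (star B), e2]
    calc q * z = (2 * B.re) • z + A * z + ‖B‖ ^ 2 • (A⁻¹ * z) := by
          rw [hq, add_mul, add_mul, smul_mul_assoc, Quaternion.algebraMap_def,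
            Quaternion.coe_mul_eq_smul]
      _ = A * z + (z * B + z * star B) + ‖B‖ ^ 2 • (A⁻¹ * z) := by rw [e3]; abel
      _ = A * z + z * B + (z * star B + ‖B‖ ^ 2 • (A⁻¹ * z)) := by abel
  intro z
  constructor
  · rintro rfl
    rw [← key z, inv_mul_cancel_left₀ hq0]
  · intro hz
    have hqz : q * z = C + A⁻¹ * C * star B := by
      rw [hz, mul_inv_cancel_left₀ hq0]
    set u : ℍ[ℝ] := (A * z + z * B) - C with hu
    have hueq : u + A⁻¹ * u * star B = 0 := by
      have hk := (key z).symm.trans hqz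
      have hsub : A⁻¹ * u * star B
          = A⁻¹ * (A * z + z * B) * star B - A⁻¹ * C * star B := by
        rw [hu, mul_sub, sub_mul]
      rw [hu, hsub, sub_add_sub_comm, hk, sub_self]
    have hu0 : u = 0 := by
      by_contra hun
      have hAu : A * u = -(u * star B) := by
        have h' : A * u + A * (A⁻¹ * u * star B) = 0 := by
          rw [← mul_add, hueq, mul_zero]
        rw [← mul_assoc, mul_inv_cancel_left₀ hA] at h'
        exact eq_neg_of_add_eq_zero_left h'
      have hun' : ‖u‖ ≠ 0 := norm_ne_zero_iff.mpr hun
      have hnorm : ‖A‖ = ‖B‖ := by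
        have hh := congrArg norm hAu
        rw [norm_mul, norm_neg, norm_mul, Quaternion.norm_star] at hh
        have hh2 : ‖A‖ * ‖u‖ = ‖B‖ * ‖u‖ := by rw [hh]; ring
        exact mul_right_cancel₀ hun' hh2
      have hre : A.re = -B.re := by
        have hAe : A = -(u * star B) * u⁻¹ := by
          rw [eq_mul_inv_iff_mul_eq₀ hun, hAu]
        have : A.re = -((u * (star B * u⁻¹)).re) := by
          rw [hAe]; simp [mul_assoc]
        rw [this, re_mul_comm, mul_assoc, inv_mul_cancel₀ hun, mul_one]
        simp
      exact hne ⟨hnorm, hre⟩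
    rw [hu, sub_eq_zero] at hu0
    exact hu0
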